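/- Let G be a finite simple graph on n vertices with a canonical representation: an enumeration v_1, …, v_n and intervals I_{v_i} = [a_i, b_i] with a_1 < ⋯ < a_n, b_1 < ⋯ < b_n, a_i ≠ b_j for all i, j, and distinct vertices adjacent iff their intervals intersect. For each i, let L(i) = min{ k : v_k ∈ N[v_i] } and U(i) = max{ k : v_k ∈ N[v_i] }. Then for every i, exactly i + L(i) − 2 of the 2n endpoint values are strictly smaller than a_i, and exactly i + U(i) − 1 of them are strictly smaller than b_i; equivalently, in the canonical sequence S the two occurrences of the index i are at positions i + L(i) − 1 and i + U(i). In particular, the canonical sequence is determined by the adjacency relation of G and the enumeration (it equals the stair sequence of the augmented adjacency matrix). -/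

import Mathlib

open Set

/-- `S : Fin (2*n) → Fin n` is the canonical sequence of the canonical interval
representation with left endpoints `a` and right endpoints `b`. -/
def IsCanonSeq {n : ℕ} (a b : Fin n → ℝ) (S : Fin (2 * n) → Fin n) : Prop :=
  ∃ val : Fin (2 * n) → ℝ, StrictMono val ∧
    Set.range val = Set.range a ∪ Set.range b ∧
    ∀ k, a (S k) = val k ∨ b (S k) = val k

/-- for a canonical representation of `G` (with enumeration `e` and
intervals `[a i, b i]`), letting `L i` and `U i` be the least and greatest indices in
the closed neighborhood of the `i`-th vertex, exactly `i + L i` endpoint values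
(0-based; `i + L(i) − 2` in 1-based counting) are strictly smaller than `a i` and
exactly `i + U i + 1` (i.e. `i + U(i) − 1` 1-based) are strictly smaller than `b i`;
equivalently, in the canonical sequence the two occurrences of `i` are at positions
`i + L i` and `i + U i + 1` (0-based). -/
theorem stmt2 {V : Type*} [Fintype V] {n : ℕ} (G : SimpleGraph V) (e : Fin n ≃ V)
    (a b : Fin n → ℝ)
    (hab : ∀ i, a i ≤ b i) (ha : StrictMono a) (hb : StrictMono b)
    (hne : ∀ i j : Fin n, a i ≠ b j)
    (hAdj : ∀ i j : Fin n, i ≠ j →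
      (G.Adj (e i) (e j) ↔ (Icc (a i) (b i) ∩ Icc (a j) (b j)).Nonempty))
    (L U : Fin n → Fin n)
    (hL : ∀ i, IsLeast {k | e k = e i ∨ G.Adj (e i) (e k)} (L i))
    (hU : ∀ i, IsGreatest {k | e k = e i ∨ G.Adj (e i) (e k)} (U i)) :
    ∀ i : Fin n,
      ((Finset.univ.filter fun j => a j < a i).card
          + (Finset.univ.filter fun j => b j < a i).card = (i : ℕ) + (L i : ℕ)) ∧
      ((Finset.univ.filter fun j => a j < b i).card
          + (Finset.univ.filter fun j => b j < b i).card = (i : ℕ) + (U i : ℕ) + 1) ∧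
      (∀ S : Fin (2 * n) → Fin n, IsCanonSeq a b S →
        ∀ k : Fin (2 * n),
          S k = i ↔ ((k : ℕ) = (i : ℕ) + (L i : ℕ) ∨ (k : ℕ) = (i : ℕ) + (U i : ℕ) + 1)) := by
  have hicc : ∀ j k : Fin n, j ≠ k → (G.Adj (e j) (e k) ↔ a j ≤ b k ∧ a k ≤ b j) := by
    intro j k hjk
    rw [hAdj j k hjk, Set.Icc_inter_Icc, Set.nonempty_Icc, max_le_iff, le_min_iff, le_min_iff]
    constructor
    · rintro ⟨⟨-, h1⟩, h2, -⟩; exact ⟨h1, h2⟩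
    · rintro ⟨h1, h2⟩; exact ⟨⟨hab j, h1⟩, h2, hab k⟩
  intro i
  have hLi : L i ≤ i := (hL i).2 (Or.inl rfl)
  have hUi : i ≤ U i := (hU i).2 (Or.inl rfl)
  -- the closed neighborhood of i is the index interval [L i, U i]
  have hmem : ∀ k : Fin n, (e k = e i ∨ G.Adj (e i) (e k)) ↔ (L i ≤ k ∧ k ≤ U i) := by
    intro k
    constructor
    · intro h; exact ⟨(hL i).2 h, (hU i).2 h⟩
    · rintro ⟨h1, h2⟩
      rcases lt_trichotomy k i with hki | hki | hki
      · -- k < i : adjacent, using that L i is adjacent to i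
        refine Or.inr ?_
        have hLlt : L i < i := lt_of_le_of_lt h1 hki
        have hAdjL : G.Adj (e i) (e (L i)) := by
          rcases (hL i).1 with h | h
          · exact absurd (e.injective h) hLlt.ne
          · exact h
        have hiL : a i ≤ b (L i) := ((hicc i (L i) hLlt.ne').1 hAdjL).1
        exact (hicc i k hki.ne').2
          ⟨hiL.trans (hb.monotone h1), (ha hki).le.trans (hab i)⟩
      · exact Or.inl (by rw [hki])
      · -- i < k : adjacent, using that U i is adjacent to i
        refine Or.inr ?_
        have hUlt : i < U i := lt_of_lt_of_le hki h2
        have hAdjU : G.Adj (e i) (e (U i)) := by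
          rcases (hU i).1 with h | h
          · exact absurd (e.injective h) hUlt.ne'
          · exact h
        have hUile : a (U i) ≤ b i := ((hicc i (U i) hUlt.ne).1 hAdjU).2
        exact (hicc i k hki.ne).2
          ⟨(ha hki).le.trans (hab k), (ha.monotone h2).trans hUile⟩
  have hnot : ∀ k : Fin n, k ≠ i → ¬ (L i ≤ k ∧ k ≤ U i) → (b i < a k ∨ b k < a i) := by
    intro k hk hn
    have : ¬ G.Adj (e i) (e k) := fun h => hn ((hmem k).1 (Or.inr h))
    rw [hicc i k (Ne.symm hk)] at this
    push_neg at this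
    rcases le_or_gt (a i) (b k) with h | h
    · exact Or.inl (this h)
    · exact Or.inr h
  -- counting lemmas
  have h1 : (Finset.univ.filter fun j => a j < a i).card = (i : ℕ) := by
    have : (Finset.univ.filter fun j => a j < a i) = Finset.Iio i := by
      ext j; simp [ha.lt_iff_lt]
    rw [this, Fin.card_Iio]
  have h4 : (Finset.univ.filter fun j => b j < b i).card = (i : ℕ) := by
    have : (Finset.univ.filter fun j => b j < b i) = Finset.Iio i := by
      ext j; simp [hb.lt_iff_lt]
    rw [this, Fin.card_Iio]
  have h2 : (Finset.univ.filter fun j => b j < a i).card = (L i : ℕ) := by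
    have : (Finset.univ.filter fun j => b j < a i) = Finset.Iio (L i) := by
      ext j
      simp only [Finset.mem_filter, Finset.mem_univ, true_and, Finset.mem_Iio]
      constructor
      · intro h
        have hji : j < i := hb.lt_iff_lt.1 (h.trans_le (hab i))
        by_contra hcon
        push_neg at hcon
        have := (hmem j).2 ⟨hcon, hji.le.trans hUi⟩
        rcases this with h' | h'
        · exact absurd (e.injective h') hji.ne
        · exact absurd ((hicc i j hji.ne').1 h').1 (not_le.2 h)
      · intro h
        have hji : j < i := h.trans_le hLi
        rcases hnot j hji.ne (fun hc => absurd hc.1 (not_le.2 h)) with h' | h'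
        · exact absurd h' (not_lt.2 ((ha hji).le.trans (hab i)))
        · exact h'
    rw [this, Fin.card_Iio]
  have h3 : (Finset.univ.filter fun j => a j < b i).card = (U i : ℕ) + 1 := by
    have : (Finset.univ.filter fun j => a j < b i) = Finset.Iic (U i) := by
      ext j
      simp only [Finset.mem_filter, Finset.mem_univ, true_and, Finset.mem_Iic]
      constructor
      · intro h
        by_contra hcon
        push_neg at hcon
        have hij : i < j := hUi.trans_lt hcon
        rcases hnot j hij.ne' (fun hc => absurd hc.2 (not_le.2 hcon)) with h' | h'
        · exact absurd h (not_lt.2 h'.le)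
        · exact absurd h' (not_lt.2 ((ha hij).le.trans (hab j)))
      · intro h
        rcases le_or_gt j i with hji | hji
        · exact lt_of_le_of_ne ((ha.monotone hji).trans (hab i)) (hne j i)
        · have := (hmem j).2 ⟨hLi.trans hji.le, h⟩
          rcases this with h' | h'
          · exact absurd (e.injective h') hji.ne'
          · exact lt_of_le_of_ne ((hicc i j hji.ne).1 h').2 (hne j i)
    rw [this, Fin.card_Iic]
  refine ⟨by rw [h1, h2], by rw [h3, h4]; omega, ?_⟩
  -- part 3
  rintro S ⟨val, hmono, hrange, hS⟩ k
  -- position of any value in the sorted sequence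
  have hcount : ∀ m : Fin (2 * n),
      (m : ℕ) = (Finset.univ.filter fun j => a j < val m).card
        + (Finset.univ.filter fun j => b j < val m).card := by
    intro m
    set c := val m with hc
    have hm1 : (m : ℕ) = (Finset.univ.filter fun j : Fin (2 * n) => val j < c).card := by
      have : (Finset.univ.filter fun j : Fin (2 * n) => val j < c) = Finset.Iio m := by
        ext j; simp [hc, hmono.lt_iff_lt]
      rw [this, Fin.card_Iio]
    set A := (Finset.univ.filter fun j => a j < c).image a with hA
    set B := (Finset.univ.filter fun j => b j < c).image b with hB
    set Vf := (Finset.univ.filter fun j : Fin (2 * n) => val j < c).image val with hV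
    have hVAB : Vf = A ∪ B := by
      ext x
      simp only [hA, hB, hV, Finset.mem_image, Finset.mem_union, Finset.mem_filter,
        Finset.mem_univ, true_and]
      constructor
      · rintro ⟨j, hj, rfl⟩
        have : val j ∈ Set.range a ∪ Set.range b := by rw [← hrange]; exact ⟨j, rfl⟩
        rcases this with ⟨m', hm'⟩ | ⟨m', hm'⟩
        · exact Or.inl ⟨m', by rw [hm']; exact hj, hm'⟩
        · exact Or.inr ⟨m', by rw [hm']; exact hj, hm'⟩
      · rintro (⟨j, hj, rfl⟩ | ⟨j, hj, rfl⟩)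
        · have : a j ∈ Set.range val := by rw [hrange]; exact Or.inl ⟨j, rfl⟩
          rcases this with ⟨m', hm'⟩
          exact ⟨m', by rw [hm']; exact hj, hm'⟩
        · have : b j ∈ Set.range val := by rw [hrange]; exact Or.inr ⟨j, rfl⟩
          rcases this with ⟨m', hm'⟩
          exact ⟨m', by rw [hm']; exact hj, hm'⟩
    have hdisj : Disjoint A B := by
      rw [Finset.disjoint_left]
      rintro x hx hx'
      simp only [hA, hB, Finset.mem_image, Finset.mem_filter] at hx hx'
      obtain ⟨j, -, rfl⟩ := hx
      obtain ⟨j', -, hj'⟩ := hx'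
      exact hne j j' hj'.symm
    have hcV : Vf.card = (Finset.univ.filter fun j : Fin (2 * n) => val j < c).card :=
      Finset.card_image_of_injective _ hmono.injective
    have hcA : A.card = (Finset.univ.filter fun j => a j < c).card :=
      Finset.card_image_of_injective _ ha.injective
    have hcB : B.card = (Finset.univ.filter fun j => b j < c).card :=
      Finset.card_image_of_injective _ hb.injective
    rw [hm1, ← hcV, hVAB, Finset.card_union_of_disjoint hdisj, hcA, hcB]
  have hvalA : ∀ m : Fin (2 * n), val m = a i → (m : ℕ) = (i : ℕ) + (L i : ℕ) := by
    intro m hm; rw [hcount m, hm, h1, h2]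
  have hvalB : ∀ m : Fin (2 * n), val m = b i → (m : ℕ) = (i : ℕ) + (U i : ℕ) + 1 := by
    intro m hm; rw [hcount m, hm, h3, h4]; omega
  constructor
  · intro h
    rcases hS k with h' | h'
    · exact Or.inl (hvalA k (by rw [← h', h]))
    · exact Or.inr (hvalB k (by rw [← h', h]))
  · rintro (h | h)
    · obtain ⟨m, hm⟩ : a i ∈ Set.range val := by rw [hrange]; exact Or.inl ⟨i, rfl⟩
      have hmk : m = k := Fin.ext (by rw [hvalA m hm, h])
      rw [hmk] at hm
      rcases hS k with h' | h'
      · exact ha.injective (h'.trans hm)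
      · exact absurd (h'.trans hm).symm (hne i (S k))
    · obtain ⟨m, hm⟩ : b i ∈ Set.range val := by rw [hrange]; exact Or.inr ⟨i, rfl⟩
      have hmk : m = k := Fin.ext (by rw [hvalB m hm, h])
      rw [hmk] at hm
      rcases hS k with h' | h'
      · exact absurd (h'.trans hm) (hne (S k) i)
      · exact hb.injective (h'.trans hm)
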